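/- Let X₁,…,X_N be independent random vectors in R^n with ‖X_i‖₂ ≤ K√n a.s. and sup_{x∈S^{n-1}} (E|⟨X_i,x⟩|^q)^{1/q} ≤ L for some q > 4. Then for every t ≥ 1, with probability at least 1 − C t^{−q}: for every nonempty subset E ⊆ {1,…,N} and every k ≤ N, (1/|E|) Σ_{i ∈ E, i ≠ k} ⟨X_i, X_k⟩² ≤ C_q t² K² L² (N/|E|)^{4/q} n, where C is absolute and C_q depends only on q. -/

import Mathlib

open MeasureTheory ProbabilityTheory Finset
open scoped RealInnerProductSpace

lemma aux_sum_rpow {α : ℝ} (h0 : 0 < α) (h1 : α < 1) (m : ℕ) :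
    ∑ i ∈ Finset.range m, ((i : ℝ) + 1) ^ (-α) ≤ (m : ℝ) ^ (1 - α) / (1 - α) := by
  have h1' : (0:ℝ) < 1 - α := by linarith
  induction m with
  | zero => simp [Real.zero_rpow (by linarith : (1:ℝ) - α ≠ 0)]
  | succ m ih =>
    rw [Finset.sum_range_succ]
    have hgm : (m : ℝ) ^ (1 - α) * ((m : ℝ) + 1) ^ α ≤ (1 - α) * m + α * ((m : ℝ) + 1) :=
      Real.geom_mean_le_arith_mean2_weighted (by linarith) h0.le (Nat.cast_nonneg m)
        (by positivity) (by ring)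
    have hm1 : (0:ℝ) < (m : ℝ) + 1 := by positivity
    have key : (m : ℝ) ^ (1 - α) + (1 - α) * ((m:ℝ) + 1) ^ (-α) ≤ ((m:ℝ) + 1) ^ (1 - α) := by
      have hrw : ((m:ℝ) + 1) ^ (1 - α) = (((m:ℝ) + 1) * ((m:ℝ)+1) ^ (-α)) := by
        rw [← Real.rpow_one_add' (by positivity) (by linarith)]
        congr 1
      have hmle : (m : ℝ) ^ (1 - α) ≤ ((m:ℝ) + α) * ((m:ℝ)+1) ^ (-α) := by
        have hne : ((m:ℝ) + 1) ^ α ≠ 0 := by positivity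
        have h2 : ((m:ℝ)+1) ^ (-α) = (((m:ℝ)+1) ^ α)⁻¹ := by
          rw [Real.rpow_neg hm1.le]
        rw [h2, ← div_eq_mul_inv, le_div_iff₀ (by positivity)]
        calc (m:ℝ) ^ (1-α) * ((m:ℝ)+1) ^ α ≤ (1-α) * m + α * ((m:ℝ)+1) := hgm
        _ = (m:ℝ) + α := by ring
      rw [hrw]
      calc (m : ℝ) ^ (1 - α) + (1 - α) * ((m:ℝ) + 1) ^ (-α)
          ≤ ((m:ℝ) + α) * ((m:ℝ)+1) ^ (-α) + (1 - α) * ((m:ℝ) + 1) ^ (-α) := by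
            gcongr
        _ = ((m:ℝ) + 1) * ((m:ℝ)+1) ^ (-α) := by ring
    push_cast
    have h3 : (m:ℝ)^(1-α)/(1-α) + ((m:ℝ)+1)^(-α) ≤ ((m:ℝ)+1)^(1-α)/(1-α) := by
      rw [le_div_iff₀ h1', add_mul, div_mul_cancel₀ _ (ne_of_gt h1')]
      nlinarith [key]
    linarith [ih]

lemma aux_pow_self_le (i : ℕ) : (i : ℝ) ^ i ≤ 3 ^ i * (Nat.factorial i) := by
  induction i with
  | zero => simp
  | succ i ih =>
    have hstep : ((i:ℝ) + 1) ^ i ≤ 3 * (i : ℝ) ^ i := by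
      rcases Nat.eq_zero_or_pos i with h | h
      · subst h; simp
      · have hi : (0:ℝ) < i := by exact_mod_cast h
        have h1 : (i:ℝ) + 1 = i * (1 + 1/i) := by field_simp
        have h2 : (1 + 1/(i:ℝ)) ^ i ≤ 3 := by
          have hb : (1 + 1/(i:ℝ)) ≤ Real.exp (1/i) := by
            have := Real.add_one_le_exp (1/(i:ℝ)); linarith
          calc (1 + 1/(i:ℝ)) ^ i ≤ (Real.exp (1/i)) ^ i := by
                apply pow_le_pow_left₀ (by positivity) hb
            _ = Real.exp ((i:ℝ) * (1/i)) := by rw [← Real.exp_nat_mul]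
            _ = Real.exp 1 := by rw [mul_one_div, div_self (ne_of_gt hi)]
            _ ≤ 3 := by linarith [Real.exp_one_lt_d9]
        calc ((i:ℝ)+1) ^ i = (i:ℝ)^i * (1 + 1/i)^i := by rw [h1, mul_pow]
          _ ≤ (i:ℝ)^i * 3 := by
              apply mul_le_mul_of_nonneg_left h2 (by positivity)
          _ = 3 * (i:ℝ)^i := by ring
    push_cast
    calc ((i:ℝ)+1) ^ (i+1) = ((i:ℝ)+1)^i * ((i:ℝ)+1) := by ring
      _ ≤ (3 * (i:ℝ)^i) * ((i:ℝ)+1) := by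
          apply mul_le_mul_of_nonneg_right hstep (by positivity)
      _ ≤ (3 * (3^i * (Nat.factorial i))) * ((i:ℝ)+1) := by
          have : (0:ℝ) ≤ (i:ℝ) + 1 := by positivity
          apply mul_le_mul_of_nonneg_right _ this
          apply mul_le_mul_of_nonneg_left ih (by norm_num)
      _ = 3 ^ (i+1) * (Nat.factorial (i+1)) := by
          push_cast [Nat.factorial_succ]; ring

lemma aux_det_sum {ι : Type*} [DecidableEq ι] (Z : ι → ℝ) (lam : ℕ → ℝ) (G : Finset ι)
    (h : ∀ S ⊆ G, S.Nonempty → ∃ j ∈ S, |Z j| ≤ lam S.card) :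
    ∀ F ⊆ G, ∑ j ∈ F, Z j ^ 2 ≤ ∑ i ∈ Finset.range F.card, lam (i+1) ^ 2 := by
  intro F
  induction F using Finset.strongInduction with
  | _ F ih =>
    intro hFG
    rcases F.eq_empty_or_nonempty with rfl | hne
    · simp
    · obtain ⟨j, hjF, hZj⟩ := h F hFG hne
      have hcard : F.card = (F.erase j).card + 1 := by
        have h1 := Finset.card_pos.mpr ⟨j, hjF⟩
        rw [Finset.card_erase_of_mem hjF]
        omega
      have herase : F.erase j ⊂ F := Finset.erase_ssubset hjF
      have hsum := ih (F.erase j) herase ((Finset.erase_subset _ _).trans hFG)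
      have hZsq : Z j ^ 2 ≤ lam F.card ^ 2 := by
        calc Z j ^ 2 = |Z j| ^ 2 := (sq_abs _).symm
          _ ≤ lam F.card ^ 2 := by
              apply pow_le_pow_left₀ (abs_nonneg _) hZj
      calc ∑ i ∈ F, Z i ^ 2 = Z j ^ 2 + ∑ i ∈ F.erase j, Z i ^ 2 :=
            (Finset.add_sum_erase _ _ hjF).symm
        _ ≤ lam F.card ^ 2 + ∑ i ∈ Finset.range (F.erase j).card, lam (i+1) ^ 2 := by
            gcongr
        _ = ∑ i ∈ Finset.range F.card, lam (i+1) ^ 2 := by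
            rw [hcard, Finset.sum_range_succ]; ring


lemma aux_le_two_pow (i : ℕ) : i + 1 ≤ 2 ^ i := by
  induction i with
  | zero => simp
  | succ m ih => rw [pow_succ]; omega

-- combinatorial sum bound
lemma aux_comb_sum {N : ℕ} (hN : 0 < N) {x : ℝ} (hx0 : 0 ≤ x) (hx : 3 * x ≤ 1/4)
    (y : ℕ → ℝ) (hy0 : y 0 = 0)
    (hy : ∀ j, 1 ≤ j → j ≤ N → y j = (x * ((j:ℝ)/N)^2)^j) :
    ∑ j ∈ Finset.range (N+1), (N.choose j : ℝ) * y j ≤ 6 * x / N := by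
  have hNR : (0:ℝ) < N := by exact_mod_cast hN
  rw [Finset.sum_range_succ']
  simp only [hy0, mul_zero, add_zero]
  have hterm : ∀ i ∈ Finset.range N,
      (N.choose (i+1) : ℝ) * y (i+1) ≤ (3*x/N) * (1/2)^i := by
    intro i hi
    rw [Finset.mem_range] at hi
    set j := i + 1 with hj
    have hj1 : 1 ≤ j := Nat.le_add_left 1 i
    have hjN : j ≤ N := hi
    have hjR : (0:ℝ) < j := by positivity
    have hjNR : (j:ℝ) ≤ N := by exact_mod_cast hjN
    have hfrac1 : (j:ℝ)/N ≤ 1 := by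
      rw [div_le_one hNR]; exact hjNR
    have hfrac0 : (0:ℝ) ≤ (j:ℝ)/N := by positivity
    rw [hy j hj1 hjN]
    have hexp : (x * ((j:ℝ)/N)^2)^j = x^j * ((j:ℝ)/N)^j * ((j:ℝ)/N)^j := by
      rw [mul_pow, ← pow_mul, two_mul, pow_add]; ring
    -- choose bound : choose N j * (j/N)^j ≤ 3^j
    have hchoose : (N.choose j : ℝ) * ((j:ℝ)/N)^j ≤ 3^j := by
      have h1 : (N.choose j : ℝ) * (Nat.factorial j : ℝ) ≤ (N:ℝ)^j := by
        have h := Nat.descFactorial_le_pow N j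
        rw [Nat.descFactorial_eq_factorial_mul_choose] at h
        calc (N.choose j : ℝ) * (Nat.factorial j : ℝ)
            = ((Nat.factorial j * N.choose j : ℕ) : ℝ) := by push_cast; ring
          _ ≤ ((N^j : ℕ) : ℝ) := by exact_mod_cast h
          _ = (N:ℝ)^j := by push_cast; ring
      have h2 : ((j:ℝ))^j ≤ 3^j * (Nat.factorial j) := aux_pow_self_le j
      have hfpos : (0:ℝ) < (Nat.factorial j : ℝ) := by
        exact_mod_cast Nat.factorial_pos j
      have hch : (N.choose j : ℝ) ≤ (N:ℝ)^j / (Nat.factorial j) := by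
        rw [le_div_iff₀ hfpos]; exact h1
      calc (N.choose j : ℝ) * ((j:ℝ)/N)^j
          = (N.choose j : ℝ) * ((j:ℝ)^j / (N:ℝ)^j) := by rw [div_pow]
        _ ≤ ((N:ℝ)^j / (Nat.factorial j)) * ((j:ℝ)^j / (N:ℝ)^j) := by
            apply mul_le_mul_of_nonneg_right hch (by positivity)
        _ = (j:ℝ)^j / (Nat.factorial j) := by
            field_simp
        _ ≤ 3^j := by
            rw [div_le_iff₀ hfpos]; exact h2
    have hfj : ((j:ℝ)/N)^j ≤ (j:ℝ)/N := pow_le_of_le_one hfrac0 hfrac1 (by omega)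
    have hjle : (j:ℝ) ≤ 2^i := by
      have h := aux_le_two_pow i
      rw [hj]
      exact_mod_cast h
    rw [hexp]
    calc (N.choose j : ℝ) * (x^j * ((j:ℝ)/N)^j * ((j:ℝ)/N)^j)
        = x^j * ((N.choose j : ℝ) * ((j:ℝ)/N)^j) * ((j:ℝ)/N)^j := by ring
      _ ≤ x^j * 3^j * ((j:ℝ)/N) := by
          apply mul_le_mul (by
            apply mul_le_mul_of_nonneg_left hchoose (by positivity)) hfj (by positivity)
            (by positivity)
      _ = (3*x)^j * ((j:ℝ)/N) := by rw [mul_pow]; ring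
      _ = (3*x) * (3*x)^i * ((j:ℝ)/N) := by rw [hj, pow_succ]; ring
      _ ≤ (3*x) * (1/4)^i * ((2:ℝ)^i/N) := by
          have hs2 : (j:ℝ)/N ≤ (2:ℝ)^i/N := by gcongr
          apply mul_le_mul
          · apply mul_le_mul_of_nonneg_left
              (pow_le_pow_left₀ (by positivity) hx i) (by positivity)
          · exact hs2
          · positivity
          · positivity
      _ = (3*x/N) * (1/2)^i := by
          have h24 : ((1:ℝ)/4)^i * (2:ℝ)^i = (1/2)^i := by rw [← mul_pow]; norm_num
          rw [show (3*x) * ((1:ℝ)/4)^i * ((2:ℝ)^i/(N:ℝ))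
              = (3*x/N)*(((1:ℝ)/4)^i*(2:ℝ)^i) from by ring, h24]
  calc ∑ i ∈ Finset.range N, (N.choose (i+1) : ℝ) * y (i+1)
      ≤ ∑ i ∈ Finset.range N, (3*x/N) * (1/2)^i := Finset.sum_le_sum hterm
    _ = (3*x/N) * ∑ i ∈ Finset.range N, ((1:ℝ)/2)^i := by rw [Finset.mul_sum]
    _ ≤ (3*x/N) * 2 := by
        apply mul_le_mul_of_nonneg_left (sum_geometric_two_le N) (by positivity)
    _ = 6 * x / N := by ring


lemma aux_key {Ω : Type} [MeasurableSpace Ω] (μ : Measure Ω) [IsProbabilityMeasure μ]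
    {n N : ℕ} (X : Fin N → Ω → EuclideanSpace ℝ (Fin n))
    (hXm : ∀ i, Measurable (X i))
    (hind : iIndepFun X μ)
    {K L q lam : ℝ} (hK : 0 < K) (hL : 0 < L) (hq : 0 < q) (hlam : 0 < lam)
    (hnorm : ∀ i, ∀ᵐ ω ∂μ, ‖X i ω‖ ≤ K * Real.sqrt n)
    (hmom : ∀ i, ∀ x : EuclideanSpace ℝ (Fin n), ‖x‖ = 1 →
      (∫ ω, |⟪X i ω, x⟫| ^ q ∂μ) ^ (1 / q) ≤ L)
    (k : Fin N) (S : Finset (Fin N)) (hkS : k ∉ S) :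
    μ (⋂ j ∈ S, {ω | lam < |⟪X j ω, X k ω⟫|}) ≤
      ENNReal.ofReal ((K * L * Real.sqrt n / lam) ^ q) ^ S.card := by
  set c : ℝ := (K * L * Real.sqrt n / lam) ^ q with hc
  -- single factor bound
  have hfac : ∀ (j : Fin N) (x : EuclideanSpace ℝ (Fin n)), ‖x‖ ≤ K * Real.sqrt n →
      μ {ω | lam < |⟪X j ω, x⟫|} ≤ ENNReal.ofReal c := by
    intro j x hx
    by_cases hx0 : x = 0
    · have hempty : {ω | lam < |⟪X j ω, x⟫|} = ∅ := by
        ext ω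
        simp only [Set.mem_setOf_eq, Set.mem_empty_iff_false, iff_false, not_lt, hx0,
          inner_zero_right, abs_zero]
        exact hlam.le
      rw [hempty, measure_empty]
      exact zero_le
    · have hxpos : (0:ℝ) < ‖x‖ := norm_pos_iff.mpr hx0
      have hBpos : (0:ℝ) < K * Real.sqrt n := lt_of_lt_of_le hxpos hx
      set u : EuclideanSpace ℝ (Fin n) := ‖x‖⁻¹ • x with hu_def
      have hu : ‖u‖ = 1 := norm_smul_inv_norm hx0
      have hxu : ‖x‖ • u = x := by
        rw [hu_def, smul_smul, mul_inv_cancel₀ (ne_of_gt hxpos), one_smul]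
      have hinner : ∀ ω, ⟪X j ω, x⟫ = ‖x‖ * ⟪X j ω, u⟫ := by
        intro ω
        calc ⟪X j ω, x⟫ = ⟪X j ω, ‖x‖ • u⟫ := by rw [hxu]
          _ = ‖x‖ * ⟪X j ω, u⟫ := real_inner_smul_right _ _ _
      have hZm : Measurable fun ω => |⟪X j ω, u⟫| := ((hXm j).inner measurable_const).abs
      have hZqm : Measurable fun ω => |⟪X j ω, u⟫| ^ q := ((Real.continuous_rpow_const hq.le).measurable.comp hZm)
      have hfmeas : Measurable fun ω => ENNReal.ofReal (|⟪X j ω, u⟫| ^ q) :=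
        hZqm.ennreal_ofReal
      have hb : ∀ᵐ ω ∂μ, |⟪X j ω, u⟫| ^ q ≤ (K * Real.sqrt n) ^ q := by
        filter_upwards [hnorm j] with ω hω
        have h1 : |⟪X j ω, u⟫| ≤ ‖X j ω‖ := by
          simpa [hu] using abs_real_inner_le_norm (X j ω) u
        exact Real.rpow_le_rpow (abs_nonneg _) (h1.trans hω) hq.le
      have hint : Integrable (fun ω => |⟪X j ω, u⟫| ^ q) μ := by
        refine Integrable.mono' (integrable_const ((K * Real.sqrt n) ^ q))
          hZqm.aestronglyMeasurable ?_
        filter_upwards [hb] with ω hω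
        rwa [Real.norm_eq_abs, abs_of_nonneg (Real.rpow_nonneg (abs_nonneg _) _)]
      have hL' : ∫ ω, |⟪X j ω, u⟫| ^ q ∂μ ≤ L ^ q := by
        have hI0 : 0 ≤ ∫ ω, |⟪X j ω, u⟫| ^ q ∂μ :=
          integral_nonneg fun ω => Real.rpow_nonneg (abs_nonneg _) _
        have hpow : ((∫ ω, |⟪X j ω, u⟫| ^ q ∂μ) ^ (1/q)) ^ q
            = ∫ ω, |⟪X j ω, u⟫| ^ q ∂μ := by
          rw [← Real.rpow_mul hI0, one_div, inv_mul_cancel₀ (ne_of_gt hq), Real.rpow_one]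
        calc ∫ ω, |⟪X j ω, u⟫| ^ q ∂μ
            = ((∫ ω, |⟪X j ω, u⟫| ^ q ∂μ) ^ (1/q)) ^ q := hpow.symm
          _ ≤ L ^ q := Real.rpow_le_rpow (Real.rpow_nonneg hI0 _) (hmom j u hu) hq.le
      set a : ENNReal := ENNReal.ofReal ((lam / (K * Real.sqrt n)) ^ q) with ha_def
      have hdpos : (0:ℝ) < lam / (K * Real.sqrt n) := div_pos hlam hBpos
      have ha0 : a ≠ 0 := (ENNReal.ofReal_pos.mpr (Real.rpow_pos_of_pos hdpos q)).ne'
      have haT : a ≠ ⊤ := ENNReal.ofReal_ne_top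
      have hsub : {ω | lam < |⟪X j ω, x⟫|} ⊆
          {ω | a ≤ ENNReal.ofReal (|⟪X j ω, u⟫| ^ q)} := by
        intro ω hω
        simp only [Set.mem_setOf_eq] at hω ⊢
        have h1 : lam < (K * Real.sqrt n) * |⟪X j ω, u⟫| := by
          rw [hinner ω, abs_mul, abs_of_pos hxpos] at hω
          calc lam < ‖x‖ * |⟪X j ω, u⟫| := hω
            _ ≤ (K * Real.sqrt n) * |⟪X j ω, u⟫| :=
                mul_le_mul_of_nonneg_right hx (abs_nonneg _)
        have h2 : lam / (K * Real.sqrt n) ≤ |⟪X j ω, u⟫| := by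
          rw [div_le_iff₀ hBpos, mul_comm]
          exact h1.le
        exact ENNReal.ofReal_le_ofReal (Real.rpow_le_rpow hdpos.le h2 hq.le)
      have hmarkov := mul_meas_ge_le_lintegral₀ (μ := μ) hfmeas.aemeasurable a
      have hlint : ∫⁻ ω, ENNReal.ofReal (|⟪X j ω, u⟫| ^ q) ∂μ ≤ ENNReal.ofReal (L ^ q) := by
        rw [← ofReal_integral_eq_lintegral_ofReal hint
          (Filter.Eventually.of_forall fun ω => Real.rpow_nonneg (abs_nonneg _) _)]
        exact ENNReal.ofReal_le_ofReal hL'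
      calc μ {ω | lam < |⟪X j ω, x⟫|}
          ≤ μ {ω | a ≤ ENNReal.ofReal (|⟪X j ω, u⟫| ^ q)} := measure_mono hsub
        _ ≤ (∫⁻ ω, ENNReal.ofReal (|⟪X j ω, u⟫| ^ q) ∂μ) / a := by
            rw [ENNReal.le_div_iff_mul_le (Or.inl ha0) (Or.inl haT), mul_comm]
            exact hmarkov
        _ ≤ ENNReal.ofReal (L ^ q) / a := by
            exact ENNReal.div_le_div_right hlint a
        _ = ENNReal.ofReal c := by
            rw [ha_def, ← ENNReal.ofReal_div_of_pos (Real.rpow_pos_of_pos hdpos q), hc]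
            congr 1
            rw [← Real.div_rpow hL.le hdpos.le]
            congr 1
            field_simp
  -- independence of X k and the tuple over S
  let V := EuclideanSpace ℝ (Fin n)
  set Y : Ω → (S → V) := fun ω j => X j ω with hY_def
  have hYm : Measurable Y := measurable_pi_lambda _ fun j => hXm j
  have hIndep : IndepFun (X k) Y μ := by
    have h := hind.indepFun_finset {k} S (Finset.disjoint_singleton_left.mpr hkS) hXm
    have h2 := h.comp
      (show Measurable fun g : ({k} : Finset (Fin N)) → V =>
        g ⟨k, Finset.mem_singleton_self k⟩ from measurable_pi_apply _)
      (measurable_id : Measurable (id : (S → V) → S → V))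
    exact h2
  set φ : Ω → V × (S → V) := fun ω => (X k ω, Y ω) with hφ_def
  have hφm : Measurable φ := (hXm k).prodMk hYm
  have hmap : μ.map φ = (μ.map (X k)).prod (μ.map Y) :=
    (indepFun_iff_map_prod_eq_prod_map_map (hXm k).aemeasurable hYm.aemeasurable).mp hIndep
  set T : Set (V × (S → V)) := {p | ∀ j : S, lam < |⟪p.2 j, p.1⟫|} with hT_def
  have hTmeas : MeasurableSet T := by
    have : T = ⋂ j : S, {p : V × (S → V) | lam < |⟪p.2 j, p.1⟫|} := by
      ext p; simp [hT_def, Set.mem_iInter]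
    rw [this]
    refine MeasurableSet.iInter fun j => ?_
    exact measurableSet_lt measurable_const
      ((Continuous.inner ((continuous_apply (j : S)).comp continuous_snd)
        continuous_fst).abs.measurable)
  have hDmeas : ∀ x : V, MeasurableSet {z : V | lam < |⟪z, x⟫|} := fun x =>
    measurableSet_lt measurable_const
      ((Continuous.inner continuous_id continuous_const).abs.measurable)
  have hpre : (⋂ j ∈ S, {ω | lam < |⟪X j ω, X k ω⟫|}) = φ ⁻¹' T := by
    ext ω
    simp only [hT_def, hφ_def, hY_def, Set.mem_iInter, Set.mem_setOf_eq, Set.mem_preimage,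
      Subtype.forall]
  haveI : IsProbabilityMeasure (μ.map (X k)) := Measure.isProbabilityMeasure_map (hXm k).aemeasurable
  have hslice : ∀ x : V, ‖x‖ ≤ K * Real.sqrt n →
      (μ.map Y) (Prod.mk x ⁻¹' T) ≤ ENNReal.ofReal c ^ S.card := by
    intro x hx
    have hTs : MeasurableSet (Prod.mk x ⁻¹' T) := hTmeas.preimage measurable_prodMk_left
    have hYapp : (μ.map Y) (Prod.mk x ⁻¹' T) = μ (Y ⁻¹' (Prod.mk x ⁻¹' T)) :=
      Measure.map_apply hYm hTs
    have hset : Y ⁻¹' (Prod.mk x ⁻¹' T) = ⋂ j ∈ S, X j ⁻¹' {z : V | lam < |⟪z, x⟫|} := by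
      ext ω
      simp only [hT_def, hY_def, Set.mem_iInter, Set.mem_setOf_eq, Set.mem_preimage,
        Subtype.forall]
      exact Iff.rfl
    rw [hYapp, hset, hind.measure_inter_preimage_eq_mul S (fun i _ => hDmeas x)]
    calc ∏ j ∈ S, μ (X j ⁻¹' {z : V | lam < |⟪z, x⟫|})
        ≤ ∏ _j ∈ S, ENNReal.ofReal c := Finset.prod_le_prod' fun j _ => hfac j x hx
      _ = ENNReal.ofReal c ^ S.card := Finset.prod_const _
  have hae : ∀ᵐ x ∂(μ.map (X k)), ‖x‖ ≤ K * Real.sqrt n := by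
    exact (ae_map_iff (hXm k).aemeasurable
      (measurableSet_le continuous_norm.measurable measurable_const)).mpr (hnorm k)
  rw [hpre, ← Measure.map_apply hφm hTmeas, hmap, Measure.prod_apply hTmeas]
  calc ∫⁻ x, (μ.map Y) (Prod.mk x ⁻¹' T) ∂(μ.map (X k))
      ≤ ∫⁻ _x, ENNReal.ofReal c ^ S.card ∂(μ.map (X k)) := by
        refine lintegral_mono_ae ?_
        filter_upwards [hae] with x hx
        exact hslice x hx
    _ = ENNReal.ofReal c ^ S.card := by rw [lintegral_const, measure_univ, mul_one]


set_option maxHeartbeats 2000000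

/-- There is an absolute constant `C` and, for each `q > 4`, a constant `C_q`, such that
for independent random vectors `X_i` in `ℝⁿ` with `‖X_i‖ ≤ K√n` a.s. and `q`-th marginal
moments at most `L`, for every `t ≥ 1`, with probability at least `1 − C t^{−q}`:
for every nonempty `E ⊆ {1,…,N}` and every `k`,
`(1/|E|) Σ_{i∈E, i≠k} ⟪X_i,X_k⟫² ≤ C_q t² K² L² (N/|E|)^{4/q} n`. -/
theorem pairwise_inner_sums_bound :
    ∃ C : ℝ, 0 < C ∧
      ∀ {q : ℝ}, 4 < q →
        ∃ Cq : ℝ, 0 < Cq ∧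
          ∀ {Ω : Type} [MeasurableSpace Ω] (μ : Measure Ω) [IsProbabilityMeasure μ]
            {n N : ℕ} (X : Fin N → Ω → EuclideanSpace ℝ (Fin n))
            (_ : ∀ i, Measurable (X i))
            (_ : iIndepFun X μ)
            {K L : ℝ} (_ : 0 < K) (_ : 0 < L)
            (_ : ∀ i, ∀ᵐ ω ∂μ, ‖X i ω‖ ≤ K * Real.sqrt n)
            (_ : ∀ i, ∀ x : EuclideanSpace ℝ (Fin n), ‖x‖ = 1 →
              (∫ ω, |⟪X i ω, x⟫| ^ q ∂μ) ^ (1 / q) ≤ L)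
            (t : ℝ) (_ : 1 ≤ t),
            1 - C * t ^ (-q) ≤
              (μ {ω | ∀ E : Finset (Fin N), E.Nonempty → ∀ k : Fin N,
                (1 / (E.card : ℝ)) * ∑ i ∈ E.erase k, ⟪X i ω, X k ω⟫ ^ 2 ≤
                  Cq * t ^ 2 * K ^ 2 * L ^ 2 *
                    ((N : ℝ) / E.card) ^ (4 / q) * n}).toReal := by
  classical
  refine ⟨100, by norm_num, ?_⟩
  intro q hq4
  have hq0 : (0:ℝ) < q := by linarith
  have hq4' : (0:ℝ) < q - 4 := by linarith
  refine ⟨q / (q - 4), div_pos hq0 hq4', ?_⟩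
  intro Ω _ μ _ n N X hXm hind K L hK hL hnorm hmom t ht
  have ht0 : (0:ℝ) < t := lt_of_lt_of_le one_pos ht
  have hx0 : (0:ℝ) < t ^ (-q) := Real.rpow_pos_of_pos ht0 _
  by_cases hn0 : n = 0
  · subst hn0
    have huniv : {ω : Ω | ∀ E : Finset (Fin N), E.Nonempty → ∀ k : Fin N,
        (1 / (E.card : ℝ)) * ∑ i ∈ E.erase k, ⟪X i ω, X k ω⟫ ^ 2 ≤
          q / (q-4) * t ^ 2 * K ^ 2 * L ^ 2 *
            ((N : ℝ) / E.card) ^ (4 / q) * (0:ℕ)} = Set.univ := by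
      ext ω
      simp only [Set.mem_setOf_eq, Set.mem_univ, iff_true]
      intro E _ k
      have hz : ∀ i ∈ E.erase k, ⟪X i ω, X k ω⟫ ^ 2 = 0 := by
        intro i _
        have h0 : X k ω = 0 := by
          ext j
          exact absurd j.isLt (by omega)
        rw [h0, inner_zero_right]
        norm_num
      rw [Finset.sum_eq_zero hz]
      norm_num
    rw [huniv, measure_univ, ENNReal.toReal_one]
    nlinarith [hx0]
  -- main case : n ≥ 1
  have hnpos : 0 < n := Nat.pos_of_ne_zero hn0
  have hsn : (0:ℝ) < Real.sqrt n := Real.sqrt_pos.mpr (by exact_mod_cast hnpos)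
  set x := t ^ (-q) with hxdef
  by_cases hbig : 1 ≤ 100 * x
  · have hle : 1 - 100 * x ≤ 0 := by linarith
    exact hle.trans ENNReal.toReal_nonneg
  push_neg at hbig
  have hx14 : 3 * x ≤ 1/4 := by linarith
  set lam : ℕ → ℝ := fun i => t * (K * (L * Real.sqrt n)) * ((N : ℝ) / i) ^ (2/q) with hlam
  set A : Fin N → Finset (Fin N) → Set Ω := fun k S =>
    {ω | (k ∉ S ∧ S.Nonempty) ∧ ∀ j ∈ S, lam S.card < |⟪X j ω, X k ω⟫|} with hA
  have hAmeas : ∀ k S, MeasurableSet (A k S) := by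
    intro k S
    by_cases hcond : k ∉ S ∧ S.Nonempty
    · have heq : A k S = ⋂ j ∈ S, {ω | lam S.card < |⟪X j ω, X k ω⟫|} := by
        ext ω
        simp only [hA, Set.mem_setOf_eq, Set.mem_iInter, hcond, true_and]
        tauto
      rw [heq]
      exact MeasurableSet.biInter S.countable_toSet fun j _ =>
        measurableSet_lt measurable_const (((hXm j).inner (hXm k)).abs)
    · have heq : A k S = ∅ := by
        ext ω
        simp only [hA, Set.mem_setOf_eq, Set.mem_empty_iff_false, iff_false, not_and]
        intro h
        exact absurd h hcond
      rw [heq]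
      exact MeasurableSet.empty
  set Bad : Set Ω := ⋃ k, ⋃ S, A k S with hBad
  have hBadmeas : MeasurableSet Bad :=
    MeasurableSet.iUnion fun k => MeasurableSet.iUnion fun S => hAmeas k S
  set y : ℕ → ℝ := fun i => if i = 0 then 0 else (x * ((i:ℝ)/N)^2)^i with hy
  have hy_nonneg : ∀ i, 0 ≤ y i := by
    intro i
    by_cases h : i = 0
    · simp [hy, h]
    · simp only [hy, if_neg h]
      positivity
  -- bound on each A k S
  have hA_le : ∀ k S, μ (A k S) ≤ ENNReal.ofReal (y S.card) := by
    intro k S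
    by_cases hcond : k ∉ S ∧ S.Nonempty
    · obtain ⟨hkS, hSne⟩ := hcond
      have hcard0 : S.card ≠ 0 := Finset.card_ne_zero.mpr hSne
      have hcardpos : 0 < S.card := Nat.pos_of_ne_zero hcard0
      have hcardN : S.card ≤ N := by
        simpa using Finset.card_le_card (Finset.subset_univ S)
      have hNpos : 0 < N := lt_of_lt_of_le hcardpos hcardN
      have hcR : (0:ℝ) < (S.card : ℝ) := by exact_mod_cast hcardpos
      have hNR : (0:ℝ) < (N : ℝ) := by exact_mod_cast hNpos
      have hb : (0:ℝ) < (N:ℝ)/(S.card:ℝ) := div_pos hNR hcR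
      have hlampos : 0 < lam S.card :=
        mul_pos (mul_pos ht0 (mul_pos hK (mul_pos hL hsn))) (Real.rpow_pos_of_pos hb _)
      have hsub : A k S ⊆ ⋂ j ∈ S, {ω | lam S.card < |⟪X j ω, X k ω⟫|} := by
        intro ω hω
        exact Set.mem_iInter₂.mpr fun j hj => hω.2 j hj
      have hval : (K * L * Real.sqrt n / lam S.card) ^ q = x * ((S.card:ℝ)/N)^2 := by
        have hrp : (0:ℝ) < ((N:ℝ)/(S.card:ℝ)) ^ (2/q) := Real.rpow_pos_of_pos hb _
        have h1 : K * L * Real.sqrt n / lam S.card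
            = (t * ((N:ℝ)/(S.card:ℝ)) ^ (2/q))⁻¹ := by
          rw [hlam]
          field_simp
        have h2 : (2/q) * q = (2:ℝ) := div_mul_cancel₀ _ (ne_of_gt hq0)
        have h3 : ((N:ℝ)/(S.card:ℝ)) ^ (2:ℝ) = ((N:ℝ)/(S.card:ℝ)) ^ (2:ℕ) := by
          rw [← Real.rpow_natCast ((N:ℝ)/(S.card:ℝ)) 2]
          norm_num
        calc (K * L * Real.sqrt n / lam S.card) ^ q
            = ((t * ((N:ℝ)/(S.card:ℝ)) ^ (2/q))⁻¹) ^ q := by rw [h1]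
          _ = ((t * ((N:ℝ)/(S.card:ℝ)) ^ (2/q)) ^ q)⁻¹ := Real.inv_rpow (by positivity) q
          _ = (t ^ q)⁻¹ * ((((N:ℝ)/(S.card:ℝ)) ^ (2/q)) ^ q)⁻¹ := by
              rw [Real.mul_rpow ht0.le hrp.le, mul_inv]
          _ = x * (((S.card:ℝ)/(N:ℝ)) ^ (2:ℕ)) := by
              rw [← Real.rpow_mul hb.le, h2, h3, ← inv_pow, inv_div, hxdef,
                Real.rpow_neg ht0.le]
      calc μ (A k S) ≤ μ (⋂ j ∈ S, {ω | lam S.card < |⟪X j ω, X k ω⟫|}) :=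
            measure_mono hsub
        _ ≤ ENNReal.ofReal ((K * L * Real.sqrt n / lam S.card) ^ q) ^ S.card :=
            aux_key μ X hXm hind hK hL hq0 hlampos hnorm hmom k S hkS
        _ = ENNReal.ofReal (y S.card) := by
            rw [hval, ← ENNReal.ofReal_pow (mul_nonneg hx0.le (sq_nonneg _))]
            simp only [hy, if_neg hcard0]
    · have heq : A k S = ∅ := by
        ext ω
        simp only [hA, Set.mem_setOf_eq, Set.mem_empty_iff_false, iff_false, not_and]
        intro h
        exact absurd h hcond
      rw [heq, measure_empty]
      exact zero_le
  -- union bound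
  have hBadle : μ Bad ≤ ENNReal.ofReal (6 * x) := by
    rcases Nat.eq_zero_or_pos N with hN0 | hNpos
    · have hBe : Bad = ∅ := by
        rw [hBad]
        subst hN0
        simp
      rw [hBe, measure_empty]
      exact zero_le
    · have hNR : (0:ℝ) < (N:ℝ) := by exact_mod_cast hNpos
      calc μ Bad ≤ ∑ k : Fin N, ∑ S : Finset (Fin N), ENNReal.ofReal (y S.card) := by
            refine (measure_iUnion_le _).trans ?_
            rw [tsum_fintype]
            refine Finset.sum_le_sum fun k _ => ?_
            refine (measure_iUnion_le _).trans ?_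
            rw [tsum_fintype]
            exact Finset.sum_le_sum fun S _ => hA_le k S
        _ ≤ ∑ _k : Fin N, ENNReal.ofReal (6 * x / N) := by
            refine Finset.sum_le_sum fun k _ => ?_
            have hps := Finset.sum_powerset_apply_card
              (f := fun j => ENNReal.ofReal (y j)) (x := (Finset.univ : Finset (Fin N)))
            rw [Finset.powerset_univ, Finset.card_univ, Fintype.card_fin] at hps
            rw [hps]
            have hcalc : ∑ j ∈ Finset.range (N+1), (N.choose j) • ENNReal.ofReal (y j)
                = ENNReal.ofReal (∑ j ∈ Finset.range (N+1), (N.choose j : ℝ) * y j) := by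
              rw [ENNReal.ofReal_sum_of_nonneg
                (fun j _ => mul_nonneg (Nat.cast_nonneg _) (hy_nonneg j))]
              refine Finset.sum_congr rfl fun j _ => ?_
              rw [ENNReal.ofReal_mul (Nat.cast_nonneg _), ENNReal.ofReal_natCast,
                nsmul_eq_mul]
            rw [hcalc]
            refine ENNReal.ofReal_le_ofReal ?_
            refine aux_comb_sum hNpos hx0.le hx14 y (by simp [hy]) ?_
            intro j hj1 hjN
            simp only [hy, if_neg (Nat.one_le_iff_ne_zero.mp hj1)]
        _ = ENNReal.ofReal (6 * x) := by
            rw [Finset.sum_const, Finset.card_univ, Fintype.card_fin, nsmul_eq_mul,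
              ← ENNReal.ofReal_natCast N, ← ENNReal.ofReal_mul (Nat.cast_nonneg N)]
            congr 1
            field_simp
  -- good event inclusion
  have hGood : Badᶜ ⊆ {ω : Ω | ∀ E : Finset (Fin N), E.Nonempty → ∀ k : Fin N,
      (1 / (E.card : ℝ)) * ∑ i ∈ E.erase k, ⟪X i ω, X k ω⟫ ^ 2 ≤
        q / (q-4) * t ^ 2 * K ^ 2 * L ^ 2 * ((N : ℝ) / E.card) ^ (4 / q) * n} := by
    intro ω hω
    simp only [Set.mem_compl_iff, hBad, Set.mem_iUnion, not_exists] at hω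
    simp only [Set.mem_setOf_eq]
    intro E hE k
    have hgood : ∀ S ⊆ Finset.univ.erase k, S.Nonempty →
        ∃ j ∈ S, |⟪X j ω, X k ω⟫| ≤ lam S.card := by
      intro S hS hSne
      have hkS : k ∉ S := fun hk => (Finset.mem_erase.mp (hS hk)).1 rfl
      have hA' := hω k S
      by_contra hcon
      push_neg at hcon
      exact hA' ⟨⟨hkS, hSne⟩, fun j hj => hcon j hj⟩
    have hdet := aux_det_sum (fun j => ⟪X j ω, X k ω⟫) lam (Finset.univ.erase k) hgood
      (E.erase k) (Finset.erase_subset_erase k (Finset.subset_univ E))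
    set m := E.card with hm
    have hm1 : 0 < m := Finset.card_pos.mpr hE
    have hmN : m ≤ N := by simpa [hm] using Finset.card_le_card (Finset.subset_univ E)
    have hNpos : 0 < N := lt_of_lt_of_le hm1 hmN
    have hmR : (0:ℝ) < (m:ℝ) := by exact_mod_cast hm1
    have hNR : (0:ℝ) < (N:ℝ) := by exact_mod_cast hNpos
    have hα0 : (0:ℝ) < 4/q := by positivity
    have hα1 : 4/q < 1 := (div_lt_one hq0).mpr hq4
    have hstep2 : ∑ i ∈ Finset.range (E.erase k).card, lam (i+1) ^ 2
        ≤ ∑ i ∈ Finset.range m, lam (i+1) ^ 2 := by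
      refine Finset.sum_le_sum_of_subset_of_nonneg ?_ (fun i _ _ => sq_nonneg _)
      refine Finset.range_subset_range.mpr ?_
      exact le_trans (Finset.card_le_card (Finset.erase_subset k E)) le_rfl
    have hterm : ∀ i : ℕ, lam (i+1) ^ 2
        = (t^2 * K^2 * L^2 * (n:ℝ) * (N:ℝ)^((4:ℝ)/q)) * ((i:ℝ)+1)^(-((4:ℝ)/q)) := by
      intro i
      have hi1 : (0:ℝ) < ((i:ℕ)+1 : ℝ) := by positivity
      have hb : (0:ℝ) < (N:ℝ)/(((i:ℕ)+1 : ℕ):ℝ) := by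
        push_cast
        positivity
      have e1 : (((N:ℝ)/(((i:ℕ)+1 : ℕ):ℝ)) ^ ((2:ℝ)/q)) ^ (2:ℕ)
          = ((N:ℝ)/(((i:ℕ)+1 : ℕ):ℝ)) ^ ((4:ℝ)/q) := by
        rw [← Real.rpow_natCast (((N:ℝ)/(((i:ℕ)+1 : ℕ):ℝ)) ^ ((2:ℝ)/q)) 2,
          ← Real.rpow_mul hb.le]
        congr 1
        push_cast
        ring
      have e2 : ((N:ℝ)/(((i:ℕ)+1 : ℕ):ℝ)) ^ ((4:ℝ)/q)
          = (N:ℝ)^((4:ℝ)/q) * ((i:ℝ)+1)^(-((4:ℝ)/q)) := by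
        rw [Real.div_rpow (le_of_lt hNR) (by positivity), Real.rpow_neg (by positivity),
          div_eq_mul_inv]
        congr 3
        push_cast
        ring
      have hsq : Real.sqrt n ^ (2:ℕ) = (n:ℝ) := Real.sq_sqrt (Nat.cast_nonneg n)
      rw [hlam]
      rw [mul_pow, mul_pow, mul_pow, mul_pow, hsq, e1, e2]
      ring
    have hsum : ∑ i ∈ Finset.range m, lam (i+1) ^ 2
        ≤ (t^2 * K^2 * L^2 * (n:ℝ) * (N:ℝ)^((4:ℝ)/q)) * ((m:ℝ)^(1-(4:ℝ)/q)/(1-(4:ℝ)/q)) := by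
      rw [Finset.sum_congr rfl fun i _ => hterm i, ← Finset.mul_sum]
      refine mul_le_mul_of_nonneg_left ?_ (by positivity)
      exact aux_sum_rpow hα0 hα1 m
    have hfinal : ∑ i ∈ E.erase k, ⟪X i ω, X k ω⟫ ^ 2
        ≤ (t^2 * K^2 * L^2 * (n:ℝ) * (N:ℝ)^((4:ℝ)/q)) * ((m:ℝ)^(1-(4:ℝ)/q)/(1-(4:ℝ)/q)) :=
      le_trans hdet (le_trans hstep2 hsum)
    -- convert to the target form
    have em : ((N:ℝ)/(m:ℝ)) ^ ((4:ℝ)/q) = (N:ℝ)^((4:ℝ)/q) * ((m:ℝ))^(-((4:ℝ)/q)) := by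
      rw [Real.div_rpow (le_of_lt hNR) (le_of_lt hmR), Real.rpow_neg (le_of_lt hmR),
        div_eq_mul_inv]
    have em2 : ((m:ℝ))^((1:ℝ)-(4:ℝ)/q) = (m:ℝ) * ((m:ℝ))^(-((4:ℝ)/q)) := by
      rw [show (1:ℝ)-(4:ℝ)/q = 1 + (-((4:ℝ)/q)) from by ring, Real.rpow_add hmR,
        Real.rpow_one]
    have heq : (1/(m:ℝ)) * ((t^2 * K^2 * L^2 * (n:ℝ) * (N:ℝ)^((4:ℝ)/q))
          * ((m:ℝ)^(1-(4:ℝ)/q)/(1-(4:ℝ)/q)))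
        = q / (q-4) * t ^ 2 * K ^ 2 * L ^ 2 * ((N:ℝ)/(m:ℝ)) ^ ((4:ℝ)/q) * n := by
      have h1q : (1:ℝ) - 4/q = (q-4)/q := by
        field_simp
      have halg : ∀ (T u v mm : ℝ), mm ≠ 0 →
          (1/mm) * ((T * u) * ((mm * v)/((q-4)/q))) = q/(q-4) * (T * u * v) := by
        intro T u v mm hmm
        have hq4ne : q - 4 ≠ 0 := ne_of_gt hq4'
        have hqne : q ≠ 0 := ne_of_gt hq0
        field_simp
      rw [em, em2, h1q, halg _ _ _ _ (ne_of_gt hmR)]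
      ring
    calc (1 / (m : ℝ)) * ∑ i ∈ E.erase k, ⟪X i ω, X k ω⟫ ^ 2
        ≤ (1/(m:ℝ)) * ((t^2 * K^2 * L^2 * (n:ℝ) * (N:ℝ)^((4:ℝ)/q))
            * ((m:ℝ)^(1-(4:ℝ)/q)/(1-(4:ℝ)/q))) :=
          mul_le_mul_of_nonneg_left hfinal (by positivity)
      _ = q / (q-4) * t ^ 2 * K ^ 2 * L ^ 2 * ((N:ℝ)/(m:ℝ)) ^ ((4:ℝ)/q) * n := heq
  -- conclude
  have h1 : μ Badᶜ = 1 - μ Bad := prob_compl_eq_one_sub hBadmeas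
  have h2 : (μ Bad).toReal ≤ 6 * x :=
    le_trans (ENNReal.toReal_mono ENNReal.ofReal_ne_top hBadle)
      (le_of_eq (ENNReal.toReal_ofReal (by positivity)))
  have h3 : (μ Badᶜ).toReal = 1 - (μ Bad).toReal := by
    rw [h1, ENNReal.toReal_sub_of_le prob_le_one ENNReal.one_ne_top, ENNReal.toReal_one]
  have h4 : (μ Badᶜ).toReal ≤ (μ {ω : Ω | ∀ E : Finset (Fin N), E.Nonempty → ∀ k : Fin N,
      (1 / (E.card : ℝ)) * ∑ i ∈ E.erase k, ⟪X i ω, X k ω⟫ ^ 2 ≤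
        q / (q-4) * t ^ 2 * K ^ 2 * L ^ 2 * ((N : ℝ) / E.card) ^ (4 / q) * n}).toReal :=
    ENNReal.toReal_mono (measure_ne_top μ _) (measure_mono hGood)
  have h5 : 1 - 100 * x ≤ 1 - 6 * x := by linarith
  linarith [h2, h3, h4, h5]
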